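/- arXiv:1705.00474 — 3 statements merged into one kernel-verified Lean document; each statement's English description precedes it below -/
import Mathlib

section
/- Monotone decrease of the Gaussian rate function in the noise covariance: let K, B, Φ be n×n complex matrices with K Hermitian positive semidefinite, B Hermitian positive definite, and Φ Hermitian positive semidefinite. Then log det(K + B + Φ) − log det(B + Φ) ≤ log det(K + B) − log det(B). -/
open Matrix BigOperators Finset ComplexOrder

noncomputable def logDet {p : Type*} [Fintype p] [DecidableEq p] (M : Matrix p p ℂ) : ℝ :=
  Real.log M.det.re

open scoped MatrixOrder in
noncomputable def Matrix.PosSemidef.sqrt {n : Type*} [Fintype n] [DecidableEq n]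
    {A : Matrix n n ℂ} (_ : A.PosSemidef) : Matrix n n ℂ :=
  CFC.sqrt A

open scoped MatrixOrder in
lemma Matrix.PosSemidef.sqrt_mul_self {n : Type*} [Fintype n] [DecidableEq n]
    {A : Matrix n n ℂ} (hA : A.PosSemidef) : hA.sqrt * hA.sqrt = A :=
  CFC.sqrt_mul_sqrt_self A hA.nonneg

open scoped MatrixOrder in
lemma Matrix.PosSemidef.posSemidef_sqrt {n : Type*} [Fintype n] [DecidableEq n]
    {A : Matrix n n ℂ} (hA : A.PosSemidef) : hA.sqrt.PosSemidef :=
  (CFC.sqrt_nonneg A).posSemidef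

namespace LogDetAux

variable {n : Type*} [Fintype n] [DecidableEq n]

/-- The determinant of a positive definite complex matrix is a positive real. -/
lemma det_eq_re {P : Matrix n n ℂ} (hP : P.PosDef) :
    P.det = (P.det.re : ℂ) ∧ 0 < P.det.re := by
  have h := hP.det_pos
  rw [Complex.pos_iff] at h
  exact ⟨Complex.ext rfl (by simp [h.2.symm]), h.1⟩

lemma one_add_decomp {Q : Matrix n n ℂ} (hQ : Q.PosSemidef) :
    (1 : Matrix n n ℂ) + Q =
      (hQ.isHermitian.eigenvectorUnitary : Matrix n n ℂ) *
        (1 + diagonal (RCLike.ofReal ∘ hQ.isHermitian.eigenvalues)) *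
        star (hQ.isHermitian.eigenvectorUnitary : Matrix n n ℂ) := by
  set U := (hQ.isHermitian.eigenvectorUnitary : Matrix n n ℂ)
  have hU : U * star U = 1 := (Matrix.mem_unitaryGroup_iff).mp hQ.isHermitian.eigenvectorUnitary.2
  calc (1 : Matrix n n ℂ) + Q
      = U * star U + U * diagonal (RCLike.ofReal ∘ hQ.isHermitian.eigenvalues) * star U := by
        rw [hU]; exact congrArg _ hQ.isHermitian.spectral_theorem
    _ = _ := by noncomm_ring

omit [Fintype n] in
lemma one_add_diag (v : n → ℝ) :
    (1 : Matrix n n ℂ) + diagonal (RCLike.ofReal ∘ v) =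
      diagonal (fun i => ((1 + v i : ℝ) : ℂ)) := by
  rw [← diagonal_one, diagonal_add]
  exact congrArg diagonal (funext fun i => by push_cast; rfl)

/-- `det (1 + Q)` has real part at least 1 for `Q` positive semidefinite. -/
lemma one_le_det_one_add {Q : Matrix n n ℂ} (hQ : Q.PosSemidef) :
    (1 : ℝ) ≤ ((1 : Matrix n n ℂ) + Q).det.re := by
  have hU : (hQ.isHermitian.eigenvectorUnitary : Matrix n n ℂ) *
      star (hQ.isHermitian.eigenvectorUnitary : Matrix n n ℂ) = 1 :=
    (Matrix.mem_unitaryGroup_iff).mp hQ.isHermitian.eigenvectorUnitary.2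
  rw [one_add_decomp hQ, det_mul_right_comm, hU, one_mul]
  rw [one_add_diag, det_diagonal, ← Complex.ofReal_prod, Complex.ofReal_re]
  have := Finset.prod_le_prod (s := Finset.univ)
    (f := fun _ : n => (1 : ℝ)) (g := fun i => 1 + hQ.isHermitian.eigenvalues i)
    (fun i _ => zero_le_one) (fun i _ => by have h := hQ.eigenvalues_nonneg i; linarith)
  simpa using this

lemma isUnit_det_sqrt {P : Matrix n n ℂ} (hP : P.PosDef) :
    IsUnit hP.posSemidef.sqrt.det := by
  have h : hP.posSemidef.sqrt.det * hP.posSemidef.sqrt.det = P.det := by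
    rw [← det_mul, hP.posSemidef.sqrt_mul_self]
  refine isUnit_iff_ne_zero.mpr fun hz => ?_
  exact hP.det_pos.ne' (by rw [← h, hz, mul_zero])

lemma sqrt_decomp {P : Matrix n n ℂ} (hP : P.PosDef) (Q : Matrix n n ℂ) :
    P + Q = hP.posSemidef.sqrt *
      (1 + hP.posSemidef.sqrt⁻¹ * Q * hP.posSemidef.sqrt⁻¹) * hP.posSemidef.sqrt := by
  set S := hP.posSemidef.sqrt
  have h1 : S * S⁻¹ = 1 := mul_nonsing_inv _ (isUnit_det_sqrt hP)
  have h2 : S⁻¹ * S = 1 := nonsing_inv_mul _ (isUnit_det_sqrt hP)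
  have h3 : S * (S⁻¹ * Q * S⁻¹) * S = Q := by
    calc S * (S⁻¹ * Q * S⁻¹) * S = (S * S⁻¹) * Q * (S⁻¹ * S) := by noncomm_ring
      _ = Q := by rw [h1, h2, one_mul, mul_one]
  calc P + Q = S * S + S * (S⁻¹ * Q * S⁻¹) * S := by
        rw [hP.posSemidef.sqrt_mul_self, h3]
    _ = _ := by noncomm_ring

lemma sqrt_inv_psd_conj {P Q : Matrix n n ℂ} (hP : P.PosDef) (hQ : Q.PosSemidef) :
    (hP.posSemidef.sqrt⁻¹ * Q * hP.posSemidef.sqrt⁻¹).PosSemidef := by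
  have hH : (hP.posSemidef.sqrt⁻¹)ᴴ = hP.posSemidef.sqrt⁻¹ :=
    hP.posSemidef.posSemidef_sqrt.isHermitian.inv
  have := hQ.conjTranspose_mul_mul_same hP.posSemidef.sqrt⁻¹
  rwa [hH] at this

/-- Monotonicity of `det`: adding a PSD matrix to a PD matrix increases the determinant. -/
lemma det_re_le_det_re_add {P Q : Matrix n n ℂ} (hP : P.PosDef) (hQ : Q.PosSemidef) :
    P.det.re ≤ (P + Q).det.re := by
  set S := hP.posSemidef.sqrt with hSdef
  set R := S⁻¹ * Q * S⁻¹ with hRdef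
  have hR : R.PosSemidef := sqrt_inv_psd_conj hP hQ
  have hdet : (P + Q).det = P.det * (1 + R).det := by
    rw [sqrt_decomp hP Q, det_mul, det_mul, ← hSdef, ← hRdef]
    rw [← hP.posSemidef.sqrt_mul_self, det_mul]
    ring
  have h1R : ((1 : Matrix n n ℂ) + R).PosDef := Matrix.PosDef.one.add_posSemidef hR
  obtain ⟨hPre, hPpos⟩ := det_eq_re hP
  obtain ⟨hRre, _⟩ := det_eq_re h1R
  have hPim : P.det.im = 0 := by rw [hPre]; simp
  have hRim : ((1 : Matrix n n ℂ) + R).det.im = 0 := by rw [hRre]; simp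
  have hge := one_le_det_one_add hR
  calc P.det.re = P.det.re * 1 := (mul_one _).symm
    _ ≤ P.det.re * ((1 : Matrix n n ℂ) + R).det.re :=
        mul_le_mul_of_nonneg_left hge hPpos.le
    _ = (P + Q).det.re := by rw [hdet, Complex.mul_re, hPim, hRim]; ring

/-- `0 ≤ A` implies `(1 + A)⁻¹ ≤ 1`. -/
lemma one_sub_inv_one_add_psd {A : Matrix n n ℂ} (hA : A.PosSemidef) :
    ((1 : Matrix n n ℂ) - (1 + A)⁻¹).PosSemidef := by
  set U := (hA.isHermitian.eigenvectorUnitary : Matrix n n ℂ) with hUdef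
  set D : Matrix n n ℂ := diagonal (RCLike.ofReal ∘ hA.isHermitian.eigenvalues) with hDdef
  have hU1 : U * star U = 1 := (Matrix.mem_unitaryGroup_iff).mp hA.isHermitian.eigenvectorUnitary.2
  have hU2 : star U * U = 1 := mul_eq_one_comm.mp hU1
  have hUinv : U⁻¹ = star U := inv_eq_right_inv hU1
  have hsUinv : (star U)⁻¹ = U := inv_eq_right_inv hU2
  have hdec : (1 : Matrix n n ℂ) + A = U * (1 + D) * star U := one_add_decomp hA
  have hDinv : ((1 : Matrix n n ℂ) + A)⁻¹ = U * (1 + D)⁻¹ * star U := by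
    rw [hdec, Matrix.mul_inv_rev, Matrix.mul_inv_rev, hsUinv, hUinv, ← mul_assoc]
  have hsub : (1 : Matrix n n ℂ) - (1 + A)⁻¹ = U * (1 - (1 + D)⁻¹) * star U := by
    have e : U * (1 - (1 + D)⁻¹) * star U = U * star U - U * (1 + D)⁻¹ * star U := by
      noncomm_ring
    rw [e, hU1, hDinv]
  rw [hsub]
  have hdiag : (1 : Matrix n n ℂ) - (1 + D)⁻¹ =
      diagonal (fun i => ((1 - (1 + hA.isHermitian.eigenvalues i)⁻¹ : ℝ) : ℂ)) := by
    have hne : ∀ i, ((1 + hA.isHermitian.eigenvalues i : ℝ) : ℂ) ≠ 0 := fun i =>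
      Complex.ofReal_ne_zero.mpr
        (by have := hA.eigenvalues_nonneg i; intro h; linarith)
    have hDinv2 : ((1 : Matrix n n ℂ) +
        diagonal (RCLike.ofReal ∘ hA.isHermitian.eigenvalues))⁻¹ =
        diagonal (fun i => (((1 + hA.isHermitian.eigenvalues i : ℝ) : ℂ))⁻¹) := by
      apply inv_eq_right_inv
      rw [one_add_diag, diagonal_mul_diagonal, ← diagonal_one]
      exact congrArg diagonal (funext fun i => mul_inv_cancel₀ (hne i))
    rw [hDdef, hDinv2]
    ext i j
    rcases eq_or_ne i j with rfl | hij
    · simp only [Matrix.sub_apply, Matrix.one_apply_eq, diagonal_apply_eq]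
      push_cast
      ring
    · simp [Matrix.sub_apply, Matrix.one_apply_ne hij, diagonal_apply_ne _ hij]
  rw [hdiag]
  have hpsd : (diagonal (fun i => ((1 - (1 + hA.isHermitian.eigenvalues i)⁻¹ : ℝ) : ℂ))).PosSemidef := by
    apply Matrix.PosSemidef.diagonal
    intro i
    have h0 := hA.eigenvalues_nonneg i
    have h1 : (1 : ℝ) ≤ 1 + hA.isHermitian.eigenvalues i := by linarith
    have h2 : (1 + hA.isHermitian.eigenvalues i)⁻¹ ≤ 1 := inv_le_one_of_one_le₀ h1
    exact Complex.zero_le_real.mpr (by linarith)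
  have := hpsd.mul_mul_conjTranspose_same U
  rwa [← star_eq_conjTranspose] at this

/-- Inverse is antitone: `(B + Φ)⁻¹ ≤ B⁻¹`. -/
lemma inv_antitone {B Φ : Matrix n n ℂ} (hB : B.PosDef) (hΦ : Φ.PosSemidef) :
    (B⁻¹ - (B + Φ)⁻¹).PosSemidef := by
  set S := hB.posSemidef.sqrt with hSdef
  set A := S⁻¹ * Φ * S⁻¹ with hAdef
  have hApsd : A.PosSemidef := sqrt_inv_psd_conj hB hΦ
  have hTinv : (B + Φ)⁻¹ = S⁻¹ * (1 + A)⁻¹ * S⁻¹ := by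
    rw [sqrt_decomp hB Φ, Matrix.mul_inv_rev, Matrix.mul_inv_rev, ← mul_assoc]
  have hBinv : B⁻¹ = S⁻¹ * (1 : Matrix n n ℂ) * S⁻¹ := by
    rw [mul_one, ← hB.posSemidef.sqrt_mul_self, Matrix.mul_inv_rev]
  have key : B⁻¹ - (B + Φ)⁻¹ = S⁻¹ * ((1 : Matrix n n ℂ) - (1 + A)⁻¹) * S⁻¹ := by
    rw [hTinv, hBinv]; noncomm_ring
  rw [key]
  exact sqrt_inv_psd_conj hB (one_sub_inv_one_add_psd hApsd)

/-- Determinant factorization `det (K + M) = det M * det (1 + √K M⁻¹ √K)`. -/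
lemma det_K_add {K M : Matrix n n ℂ} (hM : M.PosDef) (hK : K.PosSemidef) :
    (K + M).det = M.det * ((1 : Matrix n n ℂ) + hK.sqrt * M⁻¹ * hK.sqrt).det := by
  set S := hM.posSemidef.sqrt with hSdef
  set L := hK.sqrt with hLdef
  have hMinv : M⁻¹ = S⁻¹ * S⁻¹ := by
    rw [← hM.posSemidef.sqrt_mul_self, Matrix.mul_inv_rev]
  have hdetS : S.det * S.det = M.det := by rw [← det_mul, hM.posSemidef.sqrt_mul_self]
  have hmid : ((1 : Matrix n n ℂ) + S⁻¹ * K * S⁻¹).det =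
      ((1 : Matrix n n ℂ) + L * M⁻¹ * L).det := by
    rw [← hK.sqrt_mul_self, ← hLdef]
    have e1 : S⁻¹ * (L * L) * S⁻¹ = (S⁻¹ * L) * (L * S⁻¹) := by noncomm_ring
    have e2 : (L * S⁻¹) * (S⁻¹ * L) = L * M⁻¹ * L := by rw [hMinv]; noncomm_ring
    rw [e1, det_one_add_mul_comm, e2]
  rw [add_comm K M, sqrt_decomp hM K, det_mul, det_mul, ← hSdef, hmid, ← hdetS]
  ring

end LogDetAux

open LogDetAux in
theorem logDet_rate_anti_in_noise {nn : ℕ}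
    (K B Φ : Matrix (Fin nn) (Fin nn) ℂ)
    (hK : K.PosSemidef) (hB : B.PosDef) (hΦ : Φ.PosSemidef) :
    logDet (K + B + Φ) - logDet (B + Φ) ≤ logDet (K + B) - logDet B := by
  have hT : (B + Φ).PosDef := hB.add_posSemidef hΦ
  set L := hK.sqrt with hLdef
  have hLH : Lᴴ = L := hK.posSemidef_sqrt.isHermitian
  -- PSD of the conjugated inverses
  have hTi : ((B + Φ)⁻¹).PosSemidef := hT.inv.posSemidef
  have hXin : (L * (B + Φ)⁻¹ * L).PosSemidef := by
    have := hTi.conjTranspose_mul_mul_same L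
    rwa [hLH] at this
  have hX : ((1 : Matrix (Fin nn) (Fin nn) ℂ) + L * (B + Φ)⁻¹ * L).PosDef :=
    Matrix.PosDef.one.add_posSemidef hXin
  have hYin : (L * B⁻¹ * L).PosSemidef := by
    have := hB.inv.posSemidef.conjTranspose_mul_mul_same L
    rwa [hLH] at this
  have hY : ((1 : Matrix (Fin nn) (Fin nn) ℂ) + L * B⁻¹ * L).PosDef :=
    Matrix.PosDef.one.add_posSemidef hYin
  have hDiff : (L * (B⁻¹ - (B + Φ)⁻¹) * L).PosSemidef := by
    have := (inv_antitone hB hΦ).conjTranspose_mul_mul_same L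
    rwa [hLH] at this
  -- the key eigen-comparison
  have hxy : ((1 : Matrix (Fin nn) (Fin nn) ℂ) + L * (B + Φ)⁻¹ * L).det.re ≤
      ((1 : Matrix (Fin nn) (Fin nn) ℂ) + L * B⁻¹ * L).det.re := by
    have hsplit : (1 : Matrix (Fin nn) (Fin nn) ℂ) + L * B⁻¹ * L =
        ((1 : Matrix (Fin nn) (Fin nn) ℂ) + L * (B + Φ)⁻¹ * L) +
          L * (B⁻¹ - (B + Φ)⁻¹) * L := by noncomm_ring
    rw [hsplit]
    exact det_re_le_det_re_add hX hDiff
  -- determinant factorizations, at the level of real parts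
  obtain ⟨hTre, hTpos⟩ := det_eq_re hT
  obtain ⟨hBre, hBpos⟩ := det_eq_re hB
  obtain ⟨hXre, hXpos⟩ := det_eq_re hX
  obtain ⟨hYre, hYpos⟩ := det_eq_re hY
  have hTim : (B + Φ).det.im = 0 := by rw [hTre]; simp
  have hBim : B.det.im = 0 := by rw [hBre]; simp
  have hXim : ((1 : Matrix (Fin nn) (Fin nn) ℂ) + L * (B + Φ)⁻¹ * L).det.im = 0 := by
    rw [hXre]; simp
  have hYim : ((1 : Matrix (Fin nn) (Fin nn) ℂ) + L * B⁻¹ * L).det.im = 0 := by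
    rw [hYre]; simp
  have hKT : (K + B + Φ).det.re =
      (B + Φ).det.re * ((1 : Matrix (Fin nn) (Fin nn) ℂ) + L * (B + Φ)⁻¹ * L).det.re := by
    rw [add_assoc, det_K_add hT hK, ← hLdef, Complex.mul_re, hTim, hXim]; ring
  have hKB : (K + B).det.re =
      B.det.re * ((1 : Matrix (Fin nn) (Fin nn) ℂ) + L * B⁻¹ * L).det.re := by
    rw [det_K_add hB hK, ← hLdef, Complex.mul_re, hBim, hYim]; ring
  -- arithmetic with logarithms
  unfold logDet
  rw [hKT, hKB, Real.log_mul hTpos.ne' hXpos.ne', Real.log_mul hBpos.ne' hYpos.ne']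
  have := Real.log_le_log hXpos hxy
  linarith
end

section
/- Trace comparison for block-diagonal perturbations: for every Hermitian positive definite matrix M indexed by J and every block-diagonal Hermitian positive semidefinite Φ indexed by J, Σ_{i∈I} Re tr((M_{ii})⁻¹ Φ_{ii}) ≤ Re tr(M⁻¹ Φ). -/
open Matrix BigOperators Finset ComplexOrder

def blk {I : Type*} {n : I → ℕ} (M : Matrix (Σ i, Fin (n i)) (Σ i, Fin (n i)) ℂ) (i : I) :
    Matrix (Fin (n i)) (Fin (n i)) ℂ :=
  M.submatrix (fun a => ⟨i, a⟩) (fun a => ⟨i, a⟩)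

def IsBlockDiag {I : Type*} {n : I → ℕ}
    (M : Matrix (Σ i, Fin (n i)) (Σ i, Fin (n i)) ℂ) : Prop :=
  ∀ a b : Σ i, Fin (n i), a.1 ≠ b.1 → M a b = 0

section Aux

variable {I : Type*} [Fintype I] [DecidableEq I] {n : I → ℕ}

/-- Extension of a block vector by zero. -/
def extVec (i : I) (v : Fin (n i) → ℂ) : (Σ j, Fin (n j)) → ℂ :=
  fun a => if h : a.1 = i then v (h ▸ a.2) else 0

lemma extVec_same (i : I) (v : Fin (n i) → ℂ) (k : Fin (n i)) :
    extVec i v ⟨i, k⟩ = v k := dif_pos rfl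

lemma extVec_ne (i : I) {j : I} (hj : j ≠ i) (v : Fin (n i) → ℂ) (k : Fin (n j)) :
    extVec i v ⟨j, k⟩ = 0 := dif_neg hj

lemma sum_sigma_fin (f : (Σ j, Fin (n j)) → ℂ) :
    ∑ a, f a = ∑ j, ∑ k, f ⟨j, k⟩ := by
  rw [← Finset.univ_sigma_univ, Finset.sum_sigma]

lemma ext_dotProduct_ext (i : I) (v x : Fin (n i) → ℂ) :
    star (extVec i v) ⬝ᵥ extVec i x = star v ⬝ᵥ x := by
  simp only [dotProduct, Pi.star_apply]
  rw [sum_sigma_fin]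
  rw [Fintype.sum_eq_single i]
  · exact Finset.sum_congr rfl fun k _ => by rw [extVec_same, extVec_same]
  · intro j hj
    exact Finset.sum_eq_zero fun k _ => by simp [extVec_ne i hj]

lemma ext_dotProduct_mulVec (N : Matrix (Σ j, Fin (n j)) (Σ j, Fin (n j)) ℂ)
    (i : I) (v x : Fin (n i) → ℂ) :
    star (extVec i v) ⬝ᵥ (N *ᵥ extVec i x) = star v ⬝ᵥ ((blk N i) *ᵥ x) := by
  simp only [dotProduct, Pi.star_apply, mulVec, blk, submatrix_apply]
  rw [sum_sigma_fin]
  rw [Fintype.sum_eq_single i]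
  · refine Finset.sum_congr rfl fun k _ => ?_
    rw [extVec_same]
    congr 1
    rw [sum_sigma_fin]
    rw [Fintype.sum_eq_single i]
    · exact Finset.sum_congr rfl fun l _ => by rw [extVec_same]
    · intro j hj
      exact Finset.sum_eq_zero fun l _ => by rw [extVec_ne i hj, mul_zero]
  · intro j hj
    exact Finset.sum_eq_zero fun k _ => by rw [extVec_ne i hj, star_zero, zero_mul]

lemma extVec_ne_zero (i : I) {v : Fin (n i) → ℂ} (hv : v ≠ 0) : extVec i v ≠ 0 := by
  intro h0
  apply hv
  funext k
  have := congrFun h0 ⟨i, k⟩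
  simpa [extVec_same] using this

lemma blk_posDef {M : Matrix (Σ j, Fin (n j)) (Σ j, Fin (n j)) ℂ}
    (hM : M.PosDef) (i : I) : (blk M i).PosDef := by
  refine PosDef.of_dotProduct_mulVec_pos (hM.1.submatrix _) fun v hv => ?_
  rw [← ext_dotProduct_mulVec M i v v]
  exact hM.dotProduct_mulVec_pos (extVec_ne_zero i hv)

lemma key_ineq {p : Type*} [Fintype p] [DecidableEq p] {A : Matrix p p ℂ} (hA : A.PosDef)
    (u w : p → ℂ) :
    2 * (star u ⬝ᵥ w).re - (star w ⬝ᵥ (A *ᵥ w)).re ≤ (star u ⬝ᵥ (A⁻¹ *ᵥ u)).re := by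
  have hdet : IsUnit A.det := isUnit_iff_ne_zero.mpr (ne_of_gt hA.det_pos)
  obtain ⟨y, hAy, hyu⟩ : ∃ y, A *ᵥ y = u ∧ y = A⁻¹ *ᵥ u :=
    ⟨A⁻¹ *ᵥ u, by rw [mulVec_mulVec, Matrix.mul_nonsing_inv _ hdet, one_mulVec], rfl⟩
  have h3 : star y ⬝ᵥ (A *ᵥ w) = star u ⬝ᵥ w := by
    rw [dotProduct_mulVec]
    congr 1
    have hsm : star (Aᴴ *ᵥ y) = star y ᵥ* A := by
      rw [star_mulVec, conjTranspose_conjTranspose]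
    rw [← hsm, hA.1.eq, hAy]
  have expand : star (w - y) ⬝ᵥ (A *ᵥ (w - y))
      = (star w ⬝ᵥ (A *ᵥ w)) - (star w ⬝ᵥ u) - (star u ⬝ᵥ w) + (star y ⬝ᵥ u) := by
    rw [star_sub, mulVec_sub, hAy, sub_dotProduct, dotProduct_sub, dotProduct_sub, h3]
    ring
  have h0 : (0:ℝ) ≤ (star (w - y) ⬝ᵥ (A *ᵥ (w - y))).re := by
    simpa using hA.posSemidef.re_dotProduct_nonneg (w - y)
  rw [expand] at h0
  simp only [Complex.add_re, Complex.sub_re] at h0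
  have e1 : (star w ⬝ᵥ u).re = (star u ⬝ᵥ w).re := by
    rw [star_dotProduct]
    simp [Complex.star_def]
  have e2 : (star y ⬝ᵥ u).re = (star u ⬝ᵥ y).re := by
    rw [star_dotProduct]
    simp [Complex.star_def]
  rw [e1, e2, hyu] at h0
  linarith

lemma loewner {M : Matrix (Σ j, Fin (n j)) (Σ j, Fin (n j)) ℂ}
    (hM : M.PosDef) (i : I) :
    (blk M⁻¹ i - (blk M i)⁻¹).PosSemidef := by
  have hAi : (blk M i).PosDef := blk_posDef hM i
  have hdet : IsUnit (blk M i).det := isUnit_iff_ne_zero.mpr (ne_of_gt hAi.det_pos)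
  have hD : (blk M⁻¹ i - (blk M i)⁻¹).IsHermitian :=
    (hM.inv.1.submatrix _).sub hAi.inv.1
  refine PosSemidef.of_dotProduct_mulVec_nonneg hD fun x => ?_
  set z : ℂ := star x ⬝ᵥ ((blk M⁻¹ i - (blk M i)⁻¹) *ᵥ x) with hz
  have hsz : star z = z := by
    calc star (star x ⬝ᵥ ((blk M⁻¹ i - (blk M i)⁻¹) *ᵥ x))
        = star ((blk M⁻¹ i - (blk M i)⁻¹) *ᵥ x) ⬝ᵥ x := (star_dotProduct _ _).symm
      _ = (star x ᵥ* (blk M⁻¹ i - (blk M i)⁻¹)ᴴ) ⬝ᵥ x := by rw [star_mulVec]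
      _ = star x ⬝ᵥ ((blk M⁻¹ i - (blk M i)⁻¹)ᴴ *ᵥ x) := by rw [dotProduct_mulVec]
      _ = z := by rw [hD.eq]
  have him : z.im = 0 := by
    have := congrArg Complex.im hsz
    simp only [Complex.star_def, Complex.conj_im] at this
    linarith
  have hre : 0 ≤ z.re := by
    have key := key_ineq hM (extVec i x) (extVec i ((blk M i)⁻¹ *ᵥ x))
    rw [ext_dotProduct_mulVec, ext_dotProduct_mulVec] at key
    have d1 : star (extVec i x) ⬝ᵥ extVec i ((blk M i)⁻¹ *ᵥ x)
        = star x ⬝ᵥ ((blk M i)⁻¹ *ᵥ x) := ext_dotProduct_ext i _ _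
    rw [d1] at key
    have d2 : blk M i *ᵥ ((blk M i)⁻¹ *ᵥ x) = x := by
      rw [mulVec_mulVec, Matrix.mul_nonsing_inv _ hdet, one_mulVec]
    rw [d2] at key
    have e2 : (star ((blk M i)⁻¹ *ᵥ x) ⬝ᵥ x).re = (star x ⬝ᵥ ((blk M i)⁻¹ *ᵥ x)).re := by
      rw [star_dotProduct]
      simp [Complex.star_def]
    rw [e2] at key
    have hzre : z.re = (star x ⬝ᵥ (blk M⁻¹ i *ᵥ x)).re
        - (star x ⬝ᵥ ((blk M i)⁻¹ *ᵥ x)).re := by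
      rw [hz, sub_mulVec, dotProduct_sub, Complex.sub_re]
    rw [hzre]
    linarith
  rw [Complex.le_def]
  simp [him, hre]

lemma trace_split (N : Matrix (Σ j, Fin (n j)) (Σ j, Fin (n j)) ℂ)
    {Φ : Matrix (Σ j, Fin (n j)) (Σ j, Fin (n j)) ℂ} (hΦbd : IsBlockDiag Φ) :
    (N * Φ).trace = ∑ i, ((blk N i) * (blk Φ i)).trace := by
  simp only [trace, diag_apply, mul_apply, blk, submatrix_apply]
  rw [sum_sigma_fin]
  refine Finset.sum_congr rfl fun i _ => ?_
  refine Finset.sum_congr rfl fun k _ => ?_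
  rw [sum_sigma_fin]
  rw [Fintype.sum_eq_single i]
  intro j hj
  exact Finset.sum_eq_zero fun l _ => by rw [hΦbd ⟨j, l⟩ ⟨i, k⟩ hj, mul_zero]

lemma re_trace_mul_nonneg {p : Type*} [Fintype p] [DecidableEq p]
    {P Q : Matrix p p ℂ} (hP : P.PosSemidef) (hQ : Q.PosSemidef) :
    0 ≤ ((P * Q).trace).re := by
  obtain ⟨B, rfl⟩ : ∃ B : Matrix p p ℂ, Q = Bᴴ * B := by
    open scoped MatrixOrder in exact CStarAlgebra.nonneg_iff_eq_star_mul_self.mp hQ.nonneg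
  rw [← mul_assoc, trace_mul_cycle P Bᴴ B]
  have hS : (B * P * Bᴴ).PosSemidef := hP.mul_mul_conjTranspose_same B
  have diag_nn : ∀ a, 0 ≤ ((B * P * Bᴴ) a a).re := by
    intro a
    have h := hS.re_dotProduct_nonneg (Pi.single a 1)
    have hq : star (Pi.single a (1:ℂ)) ⬝ᵥ ((B * P * Bᴴ) *ᵥ Pi.single a 1)
        = (B * P * Bᴴ) a a := by
      simp [dotProduct, Matrix.mulVec_single, Pi.star_apply, Pi.single_apply, apply_ite]
    rw [hq] at h
    simpa using h
  rw [trace, Complex.re_sum]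
  exact Finset.sum_nonneg fun a _ => diag_nn a

end Aux

theorem trace_inv_blockdiag_le
    {I : Type*} [Fintype I] [DecidableEq I] {n : I → ℕ}
    (M Φ : Matrix (Σ i, Fin (n i)) (Σ i, Fin (n i)) ℂ)
    (hM : M.PosDef) (hΦ : Φ.PosSemidef) (hΦbd : IsBlockDiag Φ) :
    ∑ i : I, (((blk M i)⁻¹ * blk Φ i).trace).re ≤ ((M⁻¹ * Φ).trace).re := by
  rw [trace_split M⁻¹ hΦbd, Complex.re_sum]
  refine Finset.sum_le_sum fun i _ => ?_
  have hD := loewner hM i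
  have hQ : (blk Φ i).PosSemidef := hΦ.submatrix _
  have h := re_trace_mul_nonneg hD hQ
  rw [sub_mul, trace_sub, Complex.sub_re] at h
  linarith
end

section
/- The convexified fronthaul function majorizes the true fronthaul function, so the convexified constraint set is an inner approximation: fix a reference point (R⁰, Ω⁰) with R⁰ Hermitian positive semidefinite and Ω⁰ Hermitian positive definite (indexed by J). For Hermitian positive semidefinite R and Hermitian positive definite Ω indexed by J and nonempty S ⊆ I, define the surrogate g̃_S(R, Ω; R⁰, Ω⁰) := Σ_{i∈S} ψ((R+Ω)_{ii}, (R⁰+Ω⁰)_{ii}) − log det(Ω_S). Then g_S(R, Ω) ≤ g̃_S(R, Ω; R⁰, Ω⁰) for all such (R, Ω), with equality when (R, Ω) = (R⁰, Ω⁰). Consequently, for capacities C_i, if g̃_S(R, Ω; R⁰, Ω⁰) ≤ Σ_{i∈S} C_i then g_S(R, Ω) ≤ Σ_{i∈S} C_i. -/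
open Matrix BigOperators Finset ComplexOrder

def psub {I : Type*} [DecidableEq I] {n : I → ℕ}
    (M : Matrix (Σ i, Fin (n i)) (Σ i, Fin (n i)) ℂ) (S : Finset I) :
    Matrix {j : Σ i, Fin (n i) // j.1 ∈ S} {j : Σ i, Fin (n i) // j.1 ∈ S} ℂ :=
  M.submatrix Subtype.val Subtype.val

noncomputable def gS {I : Type*} [Fintype I] [DecidableEq I] {n : I → ℕ} (S : Finset I)
    (R Ω : Matrix (Σ i, Fin (n i)) (Σ i, Fin (n i)) ℂ) : ℝ :=
  (∑ i ∈ S, logDet (blk (R + Ω) i)) - logDet (psub Ω S)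

noncomputable def psi {p : Type*} [Fintype p] [DecidableEq p] (X Y : Matrix p p ℂ) : ℝ :=
  logDet Y + ((Y⁻¹ * (X - Y)).trace).re

noncomputable def gtS {I : Type*} [Fintype I] [DecidableEq I] {n : I → ℕ} (S : Finset I)
    (R Ω R0 Ω0 : Matrix (Σ i, Fin (n i)) (Σ i, Fin (n i)) ℂ) : ℝ :=
  (∑ i ∈ S, psi (blk (R + Ω) i) (blk (R0 + Ω0) i)) - logDet (psub Ω S)

lemma posDef_conj {p : Type*} [Fintype p] [DecidableEq p]
    {A : Matrix p p ℂ} (hA : A.PosDef) {B : Matrix p p ℂ} (hB : IsUnit B) :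
    (Bᴴ * A * B).PosDef := by
  refine Matrix.PosDef.of_dotProduct_mulVec_pos ?_ (fun x hx => ?_)
  · show (Bᴴ * A * B)ᴴ = _
    rw [conjTranspose_mul, conjTranspose_mul, conjTranspose_conjTranspose, hA.1.eq, mul_assoc]
  · have hBx : B *ᵥ x ≠ 0 :=
      fun h => hx ((Matrix.mulVec_injective_iff_isUnit.mpr hB).eq_iff.mp (by simpa using h))
    have : star x ⬝ᵥ ((Bᴴ * A * B) *ᵥ x) = star (B *ᵥ x) ⬝ᵥ (A *ᵥ (B *ᵥ x)) := by
      rw [← mulVec_mulVec, ← mulVec_mulVec, star_mulVec, ← Matrix.dotProduct_mulVec]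
    rw [this]
    exact hA.dotProduct_mulVec_pos hBx

lemma trace_eq_sum_eig {p : Type*} [Fintype p] [DecidableEq p]
    {A : Matrix p p ℂ} (hA : A.IsHermitian) :
    A.trace = ∑ i, (hA.eigenvalues i : ℂ) := by
  conv_lhs => rw [hA.spectral_theorem]
  rw [Unitary.conjStarAlgAut_apply, trace_mul_cycle,
    (Matrix.mem_unitaryGroup_iff').mp (hA.eigenvectorUnitary).2, one_mul, trace_diagonal]
  simp

lemma sum_extend {q p : Type*} [Fintype p] [Fintype q] [DecidableEq p]
    (e : q → p) (he : Function.Injective e) (f : p → ℂ)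
    (hf : ∀ j, j ∉ Finset.univ.image e → f j = 0) :
    ∑ j, f j = ∑ a, f (e a) := by
  rw [← Finset.sum_subset (Finset.subset_univ (Finset.univ.image e)) (fun k _ hk => hf k hk),
    Finset.sum_image (fun a _ b _ h => he h)]

lemma posDef_submatrix_inj {p q : Type*} [Fintype p] [DecidableEq p] [Fintype q] [DecidableEq q]
    {M : Matrix p p ℂ} (hM : M.PosDef) (e : q → p) (he : Function.Injective e) :
    (M.submatrix e e).PosDef := by
  refine Matrix.PosDef.of_dotProduct_mulVec_pos ?_ (fun x hx => ?_)
  · show (M.submatrix e e)ᴴ = _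
    rw [conjTranspose_submatrix, hM.1.eq]
  · set y : p → ℂ := Function.extend e x 0 with hy
    have hyx : ∀ a, y (e a) = x a := fun a => he.extend_apply x 0 a
    have hy0 : ∀ j, j ∉ Finset.univ.image e → y j = 0 := by
      intro j hj
      rw [hy, Function.extend_def, dif_neg]
      · rfl
      · rintro ⟨a, rfl⟩; exact hj (Finset.mem_image_of_mem e (Finset.mem_univ a))
    have hyne : y ≠ 0 := by
      obtain ⟨a, ha⟩ := Function.ne_iff.mp hx
      exact Function.ne_iff.mpr ⟨e a, by simpa [hyx a] using ha⟩
    have key : star y ⬝ᵥ (M *ᵥ y) = star x ⬝ᵥ (M.submatrix e e *ᵥ x) := by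
      have hmv : ∀ j, (M *ᵥ y) j = ∑ b, M j (e b) * x b := by
        intro j
        rw [mulVec, dotProduct,
          sum_extend e he (fun k => M j k * y k) (fun k hk => by rw [hy0 k hk, mul_zero])]
        exact Finset.sum_congr rfl (fun a _ => by rw [hyx])
      rw [dotProduct, dotProduct,
        sum_extend e he (fun k => star y k * (M *ᵥ y) k)
          (fun k hk => by rw [Pi.star_apply, hy0 k hk, star_zero, zero_mul])]
      refine Finset.sum_congr rfl (fun a _ => ?_)
      rw [Pi.star_apply, Pi.star_apply, hyx, hmv, mulVec, dotProduct]
      rfl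
    rw [← key]
    exact hM.dotProduct_mulVec_pos hyne

open scoped MatrixOrder in
lemma logDet_le_psi {p : Type*} [Fintype p] [DecidableEq p]
    {X Y : Matrix p p ℂ} (hX : X.PosDef) (hY : Y.PosDef) :
    logDet X ≤ psi X Y := by
  set W := CFC.sqrt Y with hWdef
  have hWps : W.PosSemidef := (CFC.sqrt_nonneg Y).posSemidef
  have hWW : W * W = Y := CFC.sqrt_mul_sqrt_self Y hY.posSemidef.nonneg
  have hYdet : Y.det ≠ 0 := hY.det_pos.ne'
  have hWdetne : W.det ≠ 0 := by
    intro h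
    apply hYdet
    rw [← hWW, det_mul, h, zero_mul]
  have hWunit : IsUnit W := (Matrix.isUnit_iff_isUnit_det W).mpr hWdetne.isUnit
  have hWinvH : W⁻¹.IsHermitian := hWps.1.inv
  set Z := W⁻¹ * X * W⁻¹ with hZdef
  have hZ : Z.PosDef := by
    have := posDef_conj hX (B := W⁻¹) ((Matrix.isUnit_nonsing_inv_iff).mpr hWunit)
    rwa [hWinvH.eq] at this
  -- trace identity
  have hYinv : Y⁻¹ = W⁻¹ * W⁻¹ := by rw [← hWW, Matrix.mul_inv_rev]
  have htr : (Y⁻¹ * (X - Y)).trace = Z.trace - (Fintype.card p : ℂ) := by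
    rw [mul_sub, trace_sub, Matrix.nonsing_inv_mul Y hYdet.isUnit, trace_one, hYinv, hZdef,
      mul_assoc, trace_mul_cycle, ← mul_assoc]
  -- det identity
  have hdet : X.det = Z.det * Y.det := by
    rw [hZdef, det_mul, det_mul, det_nonsing_inv, ← hWW, det_mul]
    field_simp
    rw [Ring.inverse_eq_inv, mul_assoc, ← mul_pow, inv_mul_cancel₀ hWdetne, one_pow, mul_one]
  -- eigenvalues
  set μ := hZ.1.eigenvalues with hμ
  have hμpos : ∀ i, 0 < μ i := hZ.eigenvalues_pos
  have hZdet : Z.det = ((∏ i, μ i : ℝ) : ℂ) := by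
    rw [hZ.1.det_eq_prod_eigenvalues]; push_cast; rfl
  have hZtr : Z.trace = ((∑ i, μ i : ℝ) : ℂ) := by
    rw [trace_eq_sum_eig hZ.1]; push_cast; rfl
  have him : Y.det.im = 0 := by
    have := hY.det_pos
    rw [Complex.lt_def] at this
    simpa using this.2.symm
  have hYre : Y.det = ((Y.det.re : ℝ) : ℂ) := by
    apply Complex.ext <;> simp [him]
  have hYrepos : 0 < Y.det.re := by
    have := hY.det_pos
    rw [Complex.lt_def] at this
    simpa using this.1
  have hXre : X.det.re = (∏ i, μ i) * Y.det.re := by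
    rw [hdet, hZdet, hYre, ← Complex.ofReal_mul, Complex.ofReal_re]
    simp
  have hprodpos : 0 < ∏ i, μ i := Finset.prod_pos (fun i _ => hμpos i)
  rw [logDet, psi, logDet, hXre, Real.log_mul hprodpos.ne' hYrepos.ne', htr]
  have : (Z.trace - (Fintype.card p : ℂ)).re = (∑ i, μ i) - Fintype.card p := by
    rw [hZtr]; simp
  rw [this, Real.log_prod (fun i _ => (hμpos i).ne')]
  have hsum : ∑ i, Real.log (μ i) ≤ ∑ i, (μ i - 1) :=
    Finset.sum_le_sum (fun i _ => Real.log_le_sub_one_of_pos (hμpos i))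
  rw [Finset.sum_sub_distrib] at hsum
  simp only [Finset.sum_const, Finset.card_univ, nsmul_eq_mul, mul_one] at hsum
  linarith

lemma psi_self {p : Type*} [Fintype p] [DecidableEq p] (X : Matrix p p ℂ) :
    psi X X = logDet X := by
  simp [psi]

theorem surrogate_majorizes_fronthaul
    {I : Type*} [Fintype I] [DecidableEq I] {n : I → ℕ}
    (R0 R Ω0 Ω : Matrix (Σ i, Fin (n i)) (Σ i, Fin (n i)) ℂ)
    (hR0 : R0.PosSemidef) (hΩ0 : Ω0.PosDef)
    (hR : R.PosSemidef) (hΩ : Ω.PosDef)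
    (S : Finset I) (hS : S.Nonempty) :
    gS S R Ω ≤ gtS S R Ω R0 Ω0 ∧
    gS S R0 Ω0 = gtS S R0 Ω0 R0 Ω0 ∧
    ∀ C : I → ℝ, gtS S R Ω R0 Ω0 ≤ ∑ i ∈ S, C i → gS S R Ω ≤ ∑ i ∈ S, C i := by
  have hRΩ : (R + Ω).PosDef := Matrix.PosDef.posSemidef_add hR hΩ
  have hRΩ0 : (R0 + Ω0).PosDef := Matrix.PosDef.posSemidef_add hR0 hΩ0
  have hinj : ∀ i : I, Function.Injective (fun a : Fin (n i) => (⟨i, a⟩ : Σ i, Fin (n i))) :=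
    fun i a b h => by simpa using h
  have hblk : ∀ i, (blk (R + Ω) i).PosDef := fun i => posDef_submatrix_inj hRΩ _ (hinj i)
  have hblk0 : ∀ i, (blk (R0 + Ω0) i).PosDef := fun i => posDef_submatrix_inj hRΩ0 _ (hinj i)
  have h1 : gS S R Ω ≤ gtS S R Ω R0 Ω0 := by
    unfold gS gtS
    exact sub_le_sub_right
      (Finset.sum_le_sum fun i _ => logDet_le_psi (hblk i) (hblk0 i)) _
  have h2 : gS S R0 Ω0 = gtS S R0 Ω0 R0 Ω0 := by
    unfold gS gtS
    congr 1
    exact Finset.sum_congr rfl fun i _ => (psi_self _).symm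
  exact ⟨h1, h2, fun C hC => le_trans h1 hC⟩
end
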